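/- arXiv:1904.01274 — 2 statements merged into one kernel-verified Lean document; each statement's English description precedes it below -/
import Mathlib

section
/- The smallest eigenvalue of K̃_{2m} equals the smallest eigenvalue of the 3×3 matrix [[0, m, 0], [1, m-1, m], [0, m, m-1]]. -/
open Matrix Filter

/-- The smallest eigenvalue of a real matrix (infimum of its spectrum). -/
noncomputable def minEigM {n : Type*} [Fintype n] [DecidableEq n] (A : Matrix n n ℝ) : ℝ :=
  sInf (spectrum ℝ A)

/-- The largest eigenvalue of a real matrix (supremum of its spectrum). -/
noncomputable def maxEigM {n : Type*} [Fintype n] [DecidableEq n] (A : Matrix n n ℝ) : ℝ :=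
  sSup (spectrum ℝ A)

/-- The smallest adjacency eigenvalue of a finite simple graph. -/
noncomputable def graphMinEig {V : Type*} [Fintype V] [DecidableEq V] (G : SimpleGraph V) : ℝ := by
  classical exact minEigM (G.adjMatrix ℝ)

/-- The largest adjacency eigenvalue of a finite simple graph. -/
noncomputable def graphMaxEig {V : Type*} [Fintype V] [DecidableEq V] (G : SimpleGraph V) : ℝ := by
  classical exact maxEigM (G.adjMatrix ℝ)

/-- `K̃_{2m}`: the graph on `2m+1` vertices consisting of a complete graph on the
vertices `1,…,2m` together with the extra vertex `0` adjacent to exactly the `m`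
vertices `1,…,m`. -/
def tildeK (m : ℕ) : SimpleGraph (Fin (2 * m + 1)) where
  Adj a b := a ≠ b ∧ ((a ≠ 0 ∧ b ≠ 0) ∨ (a = 0 ∧ (b : ℕ) ≤ m) ∨ (b = 0 ∧ (a : ℕ) ≤ m))
  symm := by
    constructor
    rintro a b ⟨h1, h2⟩
    exact ⟨h1.symm, by tauto⟩
  loopless := by constructor; rintro a ⟨h1, _⟩; exact h1 rfl

section Aux

lemma mem_spectrum_iff_ev {n : Type*} [Fintype n] [DecidableEq n] (M : Matrix n n ℝ) (μ : ℝ) :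
    μ ∈ spectrum ℝ M ↔ ∃ v ≠ 0, M *ᵥ v = μ • v := by
  have key : ∀ v : n → ℝ, (algebraMap ℝ (Matrix n n ℝ) μ - M) *ᵥ v = μ • v - M *ᵥ v := by
    intro v
    rw [Matrix.sub_mulVec]
    congr 1
    funext i
    simp [Matrix.algebraMap_eq_diagonal, Matrix.mulVec_diagonal]
  rw [spectrum.mem_iff, Matrix.isUnit_iff_isUnit_det, isUnit_iff_ne_zero, not_ne_iff,
    ← Matrix.exists_mulVec_eq_zero_iff]
  constructor
  · rintro ⟨v, hv, h⟩
    exact ⟨v, hv, by rw [key] at h; exact (sub_eq_zero.mp h).symm⟩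
  · rintro ⟨v, hv, h⟩
    exact ⟨v, hv, by rw [key, h, sub_self]⟩

noncomputable def B3 (m : ℕ) : Matrix (Fin 3) (Fin 3) ℝ :=
  !![0, (m : ℝ), 0; 1, (m : ℝ) - 1, (m : ℝ); 0, (m : ℝ), (m : ℝ) - 1]

noncomputable def lift3 (m : ℕ) (u : Fin 3 → ℝ) : Fin (2 * m + 1) → ℝ :=
  fun b => if (b : ℕ) = 0 then u 0 else if (b : ℕ) ≤ m then u 1 else u 2

def fB (m : ℕ) (x : ℝ) : ℝ := x * (x - (2 * m - 1)) * (x + 1) - m * (x - (m - 1))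

lemma sum_fin_split (m : ℕ) (g : ℕ → ℝ) :
    ∑ b : Fin (2 * m + 1), g b.val
      = g 0 + (∑ i ∈ Finset.Ico 1 (m + 1), g i) + ∑ i ∈ Finset.Ico (m + 1) (2 * m + 1), g i := by
  rw [Fin.sum_univ_eq_sum_range, Finset.range_eq_Ico,
    ← Finset.sum_Ico_consecutive g (by omega : 0 ≤ m + 1) (by omega : m + 1 ≤ 2 * m + 1),
    ← Finset.sum_Ico_consecutive g (by omega : 0 ≤ 1) (by omega : 1 ≤ m + 1)]
  have : ∑ i ∈ Finset.Ico 0 1, g i = g 0 := by simp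
  rw [this]

lemma sum_lift (m : ℕ) (u : Fin 3 → ℝ) :
    ∑ b : Fin (2 * m + 1), lift3 m u b = u 0 + m * u 1 + m * u 2 := by
  have H : ∑ b : Fin (2 * m + 1), lift3 m u b
      = (if (0:ℕ) = 0 then u 0 else if 0 ≤ m then u 1 else u 2)
        + (∑ i ∈ Finset.Ico 1 (m + 1), if i = 0 then u 0 else if i ≤ m then u 1 else u 2)
        + ∑ i ∈ Finset.Ico (m + 1) (2 * m + 1),
            if i = 0 then u 0 else if i ≤ m then u 1 else u 2 :=
    sum_fin_split m (fun n => if n = 0 then u 0 else if n ≤ m then u 1 else u 2)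
  rw [H, if_pos rfl]
  have h1 : ∑ i ∈ Finset.Ico 1 (m + 1),
      (if i = 0 then u 0 else if i ≤ m then u 1 else u 2) = m * u 1 := by
    rw [Finset.sum_congr rfl (g := fun _ => u 1) (fun i hi => by
      rw [Finset.mem_Ico] at hi
      rw [if_neg (by omega), if_pos (by omega)]), Finset.sum_const, Nat.card_Ico]
    simp
  have h2 : ∑ i ∈ Finset.Ico (m + 1) (2 * m + 1),
      (if i = 0 then u 0 else if i ≤ m then u 1 else u 2) = m * u 2 := by
    rw [Finset.sum_congr rfl (g := fun _ => u 2) (fun i hi => by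
      rw [Finset.mem_Ico] at hi
      rw [if_neg (by omega), if_neg (by omega)]), Finset.sum_const, Nat.card_Ico]
    have h3 : 2 * m + 1 - (m + 1) = m := by omega
    rw [h3]
    simp
  rw [h1, h2]

lemma adj_iff (m : ℕ) (a b : Fin (2 * m + 1)) :
    (tildeK m).Adj a b ↔ (a ≠ b ∧ ((a ≠ 0 ∧ b ≠ 0) ∨ (a = 0 ∧ (b : ℕ) ≤ m)
      ∨ (b = 0 ∧ (a : ℕ) ≤ m))) := Iff.rfl

lemma fin_eq_zero_iff (m : ℕ) (a : Fin (2 * m + 1)) : a = 0 ↔ (a : ℕ) = 0 := by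
  rw [Fin.ext_iff]; simp

lemma mulVec_apply_eq (m : ℕ) [DecidableRel (tildeK m).Adj] (v : Fin (2 * m + 1) → ℝ)
    (i : Fin (2 * m + 1)) :
    ((tildeK m).adjMatrix ℝ *ᵥ v) i = ∑ b, if (tildeK m).Adj i b then v b else 0 := by
  simp [Matrix.mulVec, dotProduct, SimpleGraph.adjMatrix_apply, ite_mul]

lemma mulVec_S1 (m : ℕ) [DecidableRel (tildeK m).Adj] (v : Fin (2 * m + 1) → ℝ)
    (i : Fin (2 * m + 1)) (hi0 : (i : ℕ) ≠ 0) (him : (i : ℕ) ≤ m) :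
    ((tildeK m).adjMatrix ℝ *ᵥ v) i = (∑ b, v b) - v i := by
  rw [mulVec_apply_eq]
  have h : ∀ b : Fin (2 * m + 1),
      (if (tildeK m).Adj i b then v b else 0) = v b - (if b = i then v b else 0) := by
    intro b
    by_cases hbi : b = i
    · rw [if_neg (fun h => ((adj_iff m i b).mp h).1 hbi.symm), if_pos hbi]; ring
    · rw [if_pos, if_neg hbi, sub_zero]
      refine (adj_iff m i b).mpr ⟨fun h => hbi h.symm, ?_⟩
      by_cases hb0 : b = 0
      · exact Or.inr (Or.inr ⟨hb0, him⟩)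
      · exact Or.inl ⟨fun h => hi0 ((fin_eq_zero_iff m i).mp h), hb0⟩
  rw [Finset.sum_congr rfl fun b _ => h b, Finset.sum_sub_distrib,
    Finset.sum_ite_eq' Finset.univ i v]
  simp

lemma mulVec_S2 (m : ℕ) [DecidableRel (tildeK m).Adj] (v : Fin (2 * m + 1) → ℝ)
    (i : Fin (2 * m + 1)) (him : m < (i : ℕ)) :
    ((tildeK m).adjMatrix ℝ *ᵥ v) i = (∑ b, v b) - v 0 - v i := by
  rw [mulVec_apply_eq]
  have hi0 : i ≠ 0 := fun h => by
    rw [fin_eq_zero_iff] at h; omega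
  have h : ∀ b : Fin (2 * m + 1),
      (if (tildeK m).Adj i b then v b else 0)
        = v b - (if b = 0 then v b else 0) - (if b = i then v b else 0) := by
    intro b
    by_cases hbi : b = i
    · rw [if_neg (fun h => ((adj_iff m i b).mp h).1 hbi.symm), if_pos hbi,
        if_neg (by rw [hbi]; exact hi0)]
      ring
    · by_cases hb0 : b = 0
      · rw [if_neg, if_pos hb0, if_neg hbi]
        · ring
        · intro hadj
          rcases ((adj_iff m i b).mp hadj).2 with ⟨_, h2⟩ | ⟨h1, _⟩ | ⟨h1, h2⟩
          · exact h2 hb0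
          · exact hi0 h1
          · rw [fin_eq_zero_iff] at h1
            omega
      · rw [if_pos, if_neg hb0, if_neg hbi, sub_zero, sub_zero]
        exact (adj_iff m i b).mpr ⟨fun h => hbi h.symm, Or.inl ⟨hi0, hb0⟩⟩
  rw [Finset.sum_congr rfl fun b _ => h b, Finset.sum_sub_distrib, Finset.sum_sub_distrib,
    Finset.sum_ite_eq' Finset.univ (0 : Fin (2 * m + 1)) v,
    Finset.sum_ite_eq' Finset.univ i v]
  simp

lemma mulVec_S0 (m : ℕ) [DecidableRel (tildeK m).Adj] (u : Fin 3 → ℝ) :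
    ((tildeK m).adjMatrix ℝ *ᵥ lift3 m u) 0 = m * u 1 := by
  rw [mulVec_apply_eq]
  have h : ∀ b : Fin (2 * m + 1),
      (if (tildeK m).Adj 0 b then lift3 m u b else 0)
        = (if (b : ℕ) = 0 then 0 else if (b : ℕ) ≤ m then u 1 else 0) := by
    intro b
    by_cases hb0 : (b : ℕ) = 0
    · rw [if_neg, if_pos hb0]
      intro h
      exact ((adj_iff m 0 b).mp h).1 ((fin_eq_zero_iff m b).mpr hb0).symm
    · by_cases hbm : (b : ℕ) ≤ m
      · rw [if_pos, if_neg hb0, if_pos hbm, lift3, if_neg hb0, if_pos hbm]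
        exact (adj_iff m 0 b).mpr
          ⟨fun h => hb0 ((fin_eq_zero_iff m b).mp h.symm), Or.inr (Or.inl ⟨rfl, hbm⟩)⟩
      · rw [if_neg, if_neg hb0, if_neg hbm]
        intro h
        rcases ((adj_iff m 0 b).mp h).2 with ⟨h1, _⟩ | ⟨_, h2⟩ | ⟨h1, h2⟩
        · exact h1 rfl
        · exact hbm h2
        · exact hb0 ((fin_eq_zero_iff m b).mp h1)
  rw [Finset.sum_congr rfl fun b _ => h b]
  have H : (∑ b : Fin (2 * m + 1), if (b : ℕ) = 0 then (0:ℝ) else if (b : ℕ) ≤ m then u 1 else 0)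
      = (if (0:ℕ) = 0 then (0:ℝ) else if 0 ≤ m then u 1 else 0)
        + (∑ i ∈ Finset.Ico 1 (m + 1), if i = 0 then (0:ℝ) else if i ≤ m then u 1 else 0)
        + ∑ i ∈ Finset.Ico (m + 1) (2 * m + 1),
            if i = 0 then (0:ℝ) else if i ≤ m then u 1 else 0 :=
    sum_fin_split m (fun n => if n = 0 then (0:ℝ) else if n ≤ m then u 1 else 0)
  rw [H, if_pos rfl]
  have h1 : ∑ i ∈ Finset.Ico 1 (m + 1),
      (if i = 0 then (0:ℝ) else if i ≤ m then u 1 else 0) = m * u 1 := by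
    rw [Finset.sum_congr rfl (g := fun _ => u 1) (fun i hi => by
      rw [Finset.mem_Ico] at hi
      rw [if_neg (by omega), if_pos (by omega)]), Finset.sum_const, Nat.card_Ico]
    simp
  have h2 : ∑ i ∈ Finset.Ico (m + 1) (2 * m + 1),
      (if i = 0 then (0:ℝ) else if i ≤ m then u 1 else 0) = 0 := by
    rw [Finset.sum_congr rfl (g := fun _ => 0) (fun i hi => by
      rw [Finset.mem_Ico] at hi
      rw [if_neg (by omega), if_neg (by omega)]), Finset.sum_const]
    simp
  rw [h1, h2]
  ring

lemma B3_mulVec (m : ℕ) (u : Fin 3 → ℝ) :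
    (B3 m *ᵥ u) 0 = m * u 1 ∧
    (B3 m *ᵥ u) 1 = u 0 + ((m : ℝ) - 1) * u 1 + m * u 2 ∧
    (B3 m *ᵥ u) 2 = m * u 1 + ((m : ℝ) - 1) * u 2 := by
  refine ⟨?_, ?_, ?_⟩ <;>
    simp [B3, Matrix.mulVec, dotProduct, Fin.sum_univ_three, Matrix.vecHead, Matrix.vecTail]

lemma lift3_val0 (m : ℕ) (u : Fin 3 → ℝ) (i : Fin (2 * m + 1)) (h : (i : ℕ) = 0) :
    lift3 m u i = u 0 := by rw [lift3, if_pos h]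

lemma lift3_val1 (m : ℕ) (u : Fin 3 → ℝ) (i : Fin (2 * m + 1)) (h0 : (i : ℕ) ≠ 0)
    (h1 : (i : ℕ) ≤ m) : lift3 m u i = u 1 := by rw [lift3, if_neg h0, if_pos h1]

lemma lift3_val2 (m : ℕ) (u : Fin 3 → ℝ) (i : Fin (2 * m + 1)) (h : m < (i : ℕ)) :
    lift3 m u i = u 2 := by rw [lift3, if_neg (by omega), if_neg (by omega)]

lemma lift3_zero (m : ℕ) : lift3 m (0 : Fin 3 → ℝ) = 0 := by
  funext b
  simp only [lift3, Pi.zero_apply]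
  split_ifs <;> rfl

lemma adj_mulVec_lift (m : ℕ) [DecidableRel (tildeK m).Adj] (u : Fin 3 → ℝ) :
    (tildeK m).adjMatrix ℝ *ᵥ lift3 m u = lift3 m (B3 m *ᵥ u) := by
  obtain ⟨hB0, hB1, hB2⟩ := B3_mulVec m u
  funext i
  rcases Nat.lt_or_ge m (i : ℕ) with him | him
  · rw [mulVec_S2 m _ i him, lift3_val2 m (B3 m *ᵥ u) i him, hB2, sum_lift,
      lift3_val0 m u 0 (by simp), lift3_val2 m u i him]
    ring
  · by_cases hi0 : (i : ℕ) = 0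
    · have h : i = 0 := (fin_eq_zero_iff m i).mpr hi0
      rw [h, mulVec_S0, lift3_val0 m (B3 m *ᵥ u) 0 (by simp), hB0]
    · rw [mulVec_S1 m _ i hi0 him, lift3_val1 m (B3 m *ᵥ u) i hi0 him, hB1, sum_lift,
        lift3_val1 m u i hi0 him]
      ring

lemma lift3_inj (m : ℕ) (hm : 0 < m) (u w : Fin 3 → ℝ) (h : lift3 m u = lift3 m w) : u = w := by
  have h0 := congrFun h ⟨0, by omega⟩
  have h1 := congrFun h ⟨1, by omega⟩
  have h2 := congrFun h ⟨m + 1, by omega⟩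
  rw [lift3_val0 m u _ rfl, lift3_val0 m w _ rfl] at h0
  rw [lift3_val1 m u _ (by simp) (by simpa using Nat.succ_le_of_lt hm), lift3_val1 m w _ (by simp)
    (by simpa using Nat.succ_le_of_lt hm)] at h1
  rw [lift3_val2 m u _ (by simp), lift3_val2 m w _ (by simp)] at h2
  funext j
  fin_cases j <;> assumption

lemma lift3_smul (m : ℕ) (μ : ℝ) (u : Fin 3 → ℝ) : lift3 m (μ • u) = μ • lift3 m u := by
  funext b
  simp only [lift3, Pi.smul_apply, smul_eq_mul]
  split_ifs <;> rfl

lemma det_sub_B3 (m : ℕ) (x : ℝ) :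
    (algebraMap ℝ (Matrix (Fin 3) (Fin 3) ℝ) x - B3 m).det = fB m x := by
  simp [Matrix.det_fin_three, B3, Matrix.algebraMap_matrix_apply, Matrix.sub_apply, fB]
  ring

lemma spec_B3 (m : ℕ) : spectrum ℝ (B3 m) = {x | fB m x = 0} := by
  ext x
  rw [Set.mem_setOf_eq, spectrum.mem_iff, Matrix.isUnit_iff_isUnit_det, isUnit_iff_ne_zero,
    not_ne_iff, det_sub_B3]

lemma fB_finite (m : ℕ) (hm : 0 < m) : {x : ℝ | fB m x = 0}.Finite := by
  set P : Polynomial ℝ := Polynomial.X ^ 3 + Polynomial.C (2 - 2 * (m:ℝ)) * Polynomial.X ^ 2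
    + Polynomial.C (-(3 * (m:ℝ) - 1)) * Polynomial.X + Polynomial.C ((m : ℝ) ^ 2 - m) with hP
  have heval : ∀ x, P.eval x = fB m x := by
    intro x
    simp [hP, fB]
    ring
  have hm1 : (1 : ℝ) ≤ m := by exact_mod_cast hm
  have hP0 : P ≠ 0 := by
    intro h
    have h2 := heval (-1)
    rw [h, Polynomial.eval_zero] at h2
    rw [fB] at h2
    nlinarith
  refine (Polynomial.finite_setOf_isRoot hP0).subset fun x hx => ?_
  simp only [Set.mem_setOf_eq, Polynomial.IsRoot, heval]
  exact hx

lemma exists_small_root (m : ℕ) (hm : 0 < m) : ∃ ξ : ℝ, fB m ξ = 0 ∧ ξ ≤ -1 := by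
  have hm1 : (1 : ℝ) ≤ m := by exact_mod_cast hm
  have hcont : ContinuousOn (fB m) (Set.Icc (-1 - m) (-1)) := by
    apply Continuous.continuousOn
    unfold fB
    fun_prop
  have hab : (-1 - (m:ℝ)) ≤ -1 := by linarith
  have hval1 : fB m (-1 - m) = -(m:ℝ)^2 - 3 * m^3 := by rw [fB]; ring
  have hval2 : fB m (-1) = (m:ℝ)^2 := by rw [fB]; ring
  have h0 : (0 : ℝ) ∈ Set.Icc (fB m (-1 - m)) (fB m (-1)) := by
    rw [hval1, hval2]
    constructor
    · nlinarith
    · nlinarith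
  obtain ⟨ξ, hξ, hfξ⟩ := intermediate_value_Icc hab hcont h0
  exact ⟨ξ, hfξ, hξ.2⟩

end Aux

/-- The smallest eigenvalue of `K̃_{2m}` equals the smallest eigenvalue of the
quotient matrix `[[0, m, 0], [1, m-1, m], [0, m, m-1]]`. -/
theorem stmt3 (m : ℕ) (hm : 0 < m) :
    graphMinEig (tildeK m) =
      minEigM !![0, (m : ℝ), 0; 1, (m : ℝ) - 1, (m : ℝ); 0, (m : ℝ), (m : ℝ) - 1] := by
  letI inst0 : DecidableRel (tildeK m).Adj := Classical.decRel _
  have norm : ∀ (i1 : DecidableRel (tildeK m).Adj),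
      sInf (spectrum ℝ (@SimpleGraph.adjMatrix ℝ (Fin (2 * m + 1)) (tildeK m) i1 _ _))
        = sInf (spectrum ℝ (@SimpleGraph.adjMatrix ℝ (Fin (2 * m + 1)) (tildeK m) inst0 _ _)) :=
    fun i1 => by rw [Subsingleton.elim i1 inst0]
  unfold graphMinEig minEigM
  rw [norm _]
  have hRHS : !![0, (m : ℝ), 0; 1, (m : ℝ) - 1, (m : ℝ); 0, (m : ℝ), (m : ℝ) - 1] = B3 m := rfl
  rw [hRHS]
  set SA := spectrum ℝ ((tildeK m).adjMatrix ℝ) with hSA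
  set SB := spectrum ℝ (B3 m) with hSB
  have h1 : SB ⊆ SA := by
    intro μ hμ
    rw [hSB, mem_spectrum_iff_ev] at hμ
    obtain ⟨u, hu, hBu⟩ := hμ
    rw [hSA, mem_spectrum_iff_ev]
    refine ⟨lift3 m u, ?_, ?_⟩
    · intro h
      exact hu (lift3_inj m hm u 0 (by rw [h, lift3_zero]))
    · rw [adj_mulVec_lift, hBu, lift3_smul]
  have h2 : SA ⊆ SB ∪ {-1} := by
    intro μ hμ
    by_cases hμ1 : μ = -1
    · exact Or.inr hμ1
    left
    rw [hSA, mem_spectrum_iff_ev] at hμ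
    obtain ⟨v, hv, hAv⟩ := hμ
    set T := ∑ b, v b with hT
    have hS1 : ∀ i : Fin (2 * m + 1), (i : ℕ) ≠ 0 → (i : ℕ) ≤ m → (μ + 1) * v i = T := by
      intro i h0 h1
      have h3 := mulVec_S1 m v i h0 h1
      rw [hAv] at h3
      simp only [Pi.smul_apply, smul_eq_mul] at h3
      rw [← hT] at h3
      linarith
    have hS2 : ∀ i : Fin (2 * m + 1), m < (i : ℕ) → (μ + 1) * v i = T - v 0 := by
      intro i h0
      have h3 := mulVec_S2 m v i h0
      rw [hAv] at h3
      simp only [Pi.smul_apply, smul_eq_mul] at h3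
      rw [← hT] at h3
      linarith
    have hμ1' : μ + 1 ≠ 0 := fun h => hμ1 (by linarith)
    set u : Fin 3 → ℝ := ![v 0, v ⟨1, by omega⟩, v ⟨m + 1, by omega⟩] with hu
    have hvu : v = lift3 m u := by
      funext b
      rcases Nat.lt_or_ge m (b : ℕ) with hbm | hbm
      · rw [lift3_val2 m u b hbm]
        have e1 := hS2 b hbm
        have e2 := hS2 ⟨m + 1, by omega⟩ (by simp)
        have e3 : (μ + 1) * v b = (μ + 1) * v ⟨m + 1, by omega⟩ := by rw [e1, e2]
        have e4 := mul_left_cancel₀ hμ1' e3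
        rw [e4, hu]
        simp
      · by_cases hb0 : (b : ℕ) = 0
        · rw [lift3_val0 m u b hb0, (fin_eq_zero_iff m b).mpr hb0, hu]
          simp
        · rw [lift3_val1 m u b hb0 hbm]
          have e1 := hS1 b hb0 hbm
          have e2 := hS1 ⟨1, by omega⟩ (by simp) (by simpa using Nat.succ_le_of_lt hm)
          have e3 : (μ + 1) * v b = (μ + 1) * v ⟨1, by omega⟩ := by rw [e1, e2]
          have e4 := mul_left_cancel₀ hμ1' e3
          rw [e4, hu]
          simp
    rw [hSB, mem_spectrum_iff_ev]
    refine ⟨u, ?_, ?_⟩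
    · intro h
      apply hv
      rw [hvu, h, lift3_zero]
    · apply lift3_inj m hm
      rw [← adj_mulVec_lift, ← hvu, hAv, hvu, lift3_smul]
  obtain ⟨ξ, hξ0, hξ1⟩ := exists_small_root m hm
  have hξB : ξ ∈ SB := by rw [hSB, spec_B3]; exact hξ0
  have hBfin : SB.Finite := by rw [hSB, spec_B3]; exact fB_finite m hm
  have hAfin : SA.Finite := ((hBfin.union (Set.finite_singleton (-1))).subset h2)
  have hBne : SB.Nonempty := ⟨ξ, hξB⟩
  have hAne : SA.Nonempty := ⟨ξ, h1 hξB⟩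
  have hBbdd : BddBelow SB := hBfin.bddBelow
  have hAbdd : BddBelow SA := hAfin.bddBelow
  apply le_antisymm
  · exact csInf_le_csInf hAbdd hBne h1
  · apply le_csInf hAne
    intro μ hμ
    rcases h2 hμ with h | h
    · exact csInf_le hBbdd h
    · rw [Set.mem_singleton_iff] at h
      rw [h]
      exact le_trans (csInf_le hBbdd hξB) hξ1
end

section
/- For every positive real λ there exists a positive integer m'(λ) such that the smallest eigenvalue of K̃_{2m'(λ)} is strictly less than -λ. -/
open Matrix Filter

section Aux

open Finset
open scoped Pointwise

/-- Test vector values: `-s` at vertex `0`, `1` on `1..m`, `-1` on `m+1..2m`. -/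
noncomputable def ggK (m s : ℕ) (a : ℕ) : ℝ := if a = 0 then -(s : ℝ) else if a ≤ m then 1 else -1

lemma sum_split_aux (m : ℕ) (f : ℕ → ℝ) :
    ∑ i ∈ Finset.range (2 * m + 1), f i
      = f 0 + (∑ i ∈ Finset.Ico 1 (m + 1), f i + ∑ i ∈ Finset.Ico (m + 1) (2 * m + 1), f i) := by
  have h0 : ∑ i ∈ Finset.Ico 0 1, f i = f 0 := by
    rw [Nat.Ico_zero_eq_range, Finset.sum_range_one]
  rw [Finset.range_eq_Ico,
    ← Finset.sum_Ico_consecutive f (Nat.zero_le (m + 1)) (by omega : m + 1 ≤ 2 * m + 1),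
    ← Finset.sum_Ico_consecutive f (Nat.zero_le 1) (by omega : 1 ≤ m + 1), h0, add_assoc]

lemma ggK_sum (m s : ℕ) : ∑ i ∈ Finset.range (2 * m + 1), ggK m s i = -(s : ℝ) := by
  rw [sum_split_aux]
  have h1 : ∑ i ∈ Finset.Ico 1 (m + 1), ggK m s i = (m : ℝ) := by
    rw [Finset.sum_congr rfl (fun i hi => show ggK m s i = 1 by
      rw [Finset.mem_Ico] at hi
      unfold ggK; rw [if_neg (by omega), if_pos (by omega)]),
      Finset.sum_const, Nat.card_Ico]
    simp
  have h2 : ∑ i ∈ Finset.Ico (m + 1) (2 * m + 1), ggK m s i = -(m : ℝ) := by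
    rw [Finset.sum_congr rfl (fun i hi => show ggK m s i = -1 by
      rw [Finset.mem_Ico] at hi
      unfold ggK; rw [if_neg (by omega), if_neg (by omega)]),
      Finset.sum_const, Nat.card_Ico]
    have : 2 * m + 1 - (m + 1) = m := by omega
    rw [this]; simp
  rw [h1, h2]
  unfold ggK
  simp

lemma ggK_sq_sum (m s : ℕ) :
    ∑ i ∈ Finset.range (2 * m + 1), ggK m s i * ggK m s i = (s : ℝ) ^ 2 + 2 * m := by
  rw [sum_split_aux]
  have h1 : ∑ i ∈ Finset.Ico 1 (m + 1), ggK m s i * ggK m s i = (m : ℝ) := by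
    rw [Finset.sum_congr rfl (fun i hi => show ggK m s i * ggK m s i = 1 by
      rw [Finset.mem_Ico] at hi
      unfold ggK; rw [if_neg (by omega), if_pos (by omega)]; ring),
      Finset.sum_const, Nat.card_Ico]
    simp
  have h2 : ∑ i ∈ Finset.Ico (m + 1) (2 * m + 1), ggK m s i * ggK m s i = (m : ℝ) := by
    rw [Finset.sum_congr rfl (fun i hi => show ggK m s i * ggK m s i = 1 by
      rw [Finset.mem_Ico] at hi
      unfold ggK; rw [if_neg (by omega), if_neg (by omega)]; ring),
      Finset.sum_const, Nat.card_Ico]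
    have : 2 * m + 1 - (m + 1) = m := by omega
    rw [this]; simp
  rw [h1, h2]
  unfold ggK
  simp
  ring

lemma ggK_tail_sum (m s : ℕ) :
    ∑ i ∈ Finset.range (2 * m + 1), (if m < i then ggK m s i else 0) = -(m : ℝ) := by
  rw [sum_split_aux]
  have h1 : ∑ i ∈ Finset.Ico 1 (m + 1), (if m < i then ggK m s i else 0) = 0 := by
    rw [Finset.sum_congr rfl (fun i hi => show (if m < i then ggK m s i else 0) = 0 by
      rw [Finset.mem_Ico] at hi
      rw [if_neg (by omega)]), Finset.sum_const_zero]
  have h2 : ∑ i ∈ Finset.Ico (m + 1) (2 * m + 1), (if m < i then ggK m s i else 0) = -(m : ℝ) := by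
    rw [Finset.sum_congr rfl (fun i hi => show (if m < i then ggK m s i else 0) = -1 by
      rw [Finset.mem_Ico] at hi
      rw [if_pos (by omega)]
      unfold ggK; rw [if_neg (by omega), if_neg (by omega)]),
      Finset.sum_const, Nat.card_Ico]
    have : 2 * m + 1 - (m + 1) = m := by omega
    rw [this]; simp
  rw [h1, h2]
  rw [if_neg (by omega)]
  ring

lemma ggK_head_sum (m s : ℕ) :
    ∑ i ∈ Finset.range (2 * m + 1), (if i = 0 then ggK m s i else 0) = -(s : ℝ) := by
  rw [Finset.sum_ite_eq' (Finset.range (2 * m + 1)) 0 (ggK m s),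
    if_pos (by simp : (0 : ℕ) ∈ Finset.range (2 * m + 1))]
  unfold ggK; simp

lemma tildeK_adj_iff (m : ℕ) (j i : Fin (2 * m + 1)) :
    (tildeK m).Adj j i ↔
      ((j : ℕ) ≠ (i : ℕ) ∧ ¬((j : ℕ) = 0 ∧ m < (i : ℕ)) ∧ ¬((i : ℕ) = 0 ∧ m < (j : ℕ))) := by
  have h0j : (j = 0) ↔ ((j : ℕ) = 0) := by rw [Fin.ext_iff]; simp
  have h0i : (i = 0) ↔ ((i : ℕ) = 0) := by rw [Fin.ext_iff]; simp
  have hji : (j = i) ↔ ((j : ℕ) = (i : ℕ)) := Fin.ext_iff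
  show (j ≠ i ∧ ((j ≠ 0 ∧ i ≠ 0) ∨ (j = 0 ∧ (i : ℕ) ≤ m) ∨ (i = 0 ∧ (j : ℕ) ≤ m))) ↔ _
  rw [ne_eq, hji, ne_eq, h0j, ne_eq, h0i]
  omega

lemma adjMatrix_entry (m : ℕ) [DecidableRel (tildeK m).Adj] (j i : Fin (2 * m + 1)) :
    (tildeK m).adjMatrix ℝ j i
      = 1 - (if (j : ℕ) = (i : ℕ) then (1 : ℝ) else 0)
        - (if (j : ℕ) = 0 ∧ m < (i : ℕ) then 1 else 0)
        - (if (i : ℕ) = 0 ∧ m < (j : ℕ) then 1 else 0) := by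
  rw [SimpleGraph.adjMatrix_apply, if_congr (tildeK_adj_iff m j i) rfl rfl]
  split_ifs <;> first | (exfalso; omega) | norm_num

lemma quad_inner (m s : ℕ) [DecidableRel (tildeK m).Adj] (j : Fin (2 * m + 1)) :
    ((tildeK m).adjMatrix ℝ).mulVec (fun i : Fin (2 * m + 1) => ggK m s i.val) j
      = -(s : ℝ) - ggK m s j.val - (if (j : ℕ) = 0 then -(m : ℝ) else 0)
        - (if m < (j : ℕ) then -(s : ℝ) else 0) := by
  classical
  set x : Fin (2 * m + 1) → ℝ := fun i => ggK m s i.val with hx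
  have hterm : ∀ i : Fin (2 * m + 1), (tildeK m).adjMatrix ℝ j i * x i
      = x i - (if (j : ℕ) = (i : ℕ) then x i else 0)
        - (if (j : ℕ) = 0 then (if m < (i : ℕ) then x i else 0) else 0)
        - (if m < (j : ℕ) then (if (i : ℕ) = 0 then x i else 0) else 0) := by
    intro i
    rw [adjMatrix_entry]
    split_ifs <;> first | (exfalso; omega) | ring1
  have hmv : ((tildeK m).adjMatrix ℝ).mulVec x j = ∑ i, (tildeK m).adjMatrix ℝ j i * x i := by
    simp [Matrix.mulVec, dotProduct]
  rw [hmv, Finset.sum_congr rfl (fun i _ => hterm i), Finset.sum_sub_distrib,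
    Finset.sum_sub_distrib, Finset.sum_sub_distrib]
  have e1 : ∑ i : Fin (2 * m + 1), x i = -(s : ℝ) := by
    rw [hx, Fin.sum_univ_eq_sum_range (ggK m s)]; exact ggK_sum m s
  have e2 : ∑ i : Fin (2 * m + 1), (if (j : ℕ) = (i : ℕ) then x i else 0) = x j := by
    have : ∀ i : Fin (2 * m + 1), (if (j : ℕ) = (i : ℕ) then x i else 0)
        = (if j = i then x i else 0) := by
      intro i
      exact if_congr Fin.ext_iff.symm rfl rfl
    rw [Finset.sum_congr rfl (fun i _ => this i), Finset.sum_ite_eq, if_pos (Finset.mem_univ j)]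
  have e3 : ∑ i : Fin (2 * m + 1), (if (j : ℕ) = 0 then (if m < (i : ℕ) then x i else 0) else 0)
      = (if (j : ℕ) = 0 then -(m : ℝ) else 0) := by
    by_cases hj : (j : ℕ) = 0
    · simp only [if_pos hj]
      rw [hx, Fin.sum_univ_eq_sum_range (fun a => if m < a then ggK m s a else 0)]
      exact ggK_tail_sum m s
    · simp only [if_neg hj, Finset.sum_const_zero]
  have e4 : ∑ i : Fin (2 * m + 1), (if m < (j : ℕ) then (if (i : ℕ) = 0 then x i else 0) else 0)
      = (if m < (j : ℕ) then -(s : ℝ) else 0) := by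
    by_cases hj : m < (j : ℕ)
    · simp only [if_pos hj]
      rw [hx, Fin.sum_univ_eq_sum_range (fun a => if a = 0 then ggK m s a else 0)]
      exact ggK_head_sum m s
    · simp only [if_neg hj, Finset.sum_const_zero]
  rw [e1, e2, e3, e4]

lemma quad_form (m s : ℕ) [DecidableRel (tildeK m).Adj] :
    (fun i : Fin (2 * m + 1) => ggK m s i.val) ⬝ᵥ
        ((tildeK m).adjMatrix ℝ).mulVec (fun i : Fin (2 * m + 1) => ggK m s i.val)
      = -(2 * (m : ℝ)) - 2 * (s : ℝ) * (m : ℝ) := by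
  classical
  set x : Fin (2 * m + 1) → ℝ := fun i => ggK m s i.val with hx
  have hdp : x ⬝ᵥ ((tildeK m).adjMatrix ℝ).mulVec x
      = ∑ j, x j * ((tildeK m).adjMatrix ℝ).mulVec x j := by
    simp [dotProduct]
  have hexp : ∀ j : Fin (2 * m + 1), x j * ((tildeK m).adjMatrix ℝ).mulVec x j
      = x j * -(s : ℝ) - x j * x j - (if (j : ℕ) = 0 then x j * -(m : ℝ) else 0)
        - (if m < (j : ℕ) then x j * -(s : ℝ) else 0) := by
    intro j
    rw [quad_inner m s j]
    split_ifs <;> ring1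
  rw [hdp, Finset.sum_congr rfl (fun j _ => hexp j)]
  rw [Finset.sum_sub_distrib, Finset.sum_sub_distrib, Finset.sum_sub_distrib]
  have e1 : ∑ j : Fin (2 * m + 1), x j * -(s : ℝ) = (s : ℝ) * (s : ℝ) := by
    rw [← Finset.sum_mul]
    rw [hx, Fin.sum_univ_eq_sum_range (ggK m s), ggK_sum m s]
    ring
  have e2 : ∑ j : Fin (2 * m + 1), x j * x j = (s : ℝ) ^ 2 + 2 * m := by
    rw [hx, Fin.sum_univ_eq_sum_range (fun a => ggK m s a * ggK m s a)]
    exact ggK_sq_sum m s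
  have e3 : ∑ j : Fin (2 * m + 1), (if (j : ℕ) = 0 then x j * -(m : ℝ) else 0)
      = (s : ℝ) * (m : ℝ) := by
    have : ∀ j : Fin (2 * m + 1), (if (j : ℕ) = 0 then x j * -(m : ℝ) else 0)
        = (if (j : ℕ) = 0 then x j else 0) * -(m : ℝ) := by
      intro j; split_ifs <;> ring
    rw [Finset.sum_congr rfl (fun j _ => this j), ← Finset.sum_mul,
      hx, Fin.sum_univ_eq_sum_range (fun a => if a = 0 then ggK m s a else 0), ggK_head_sum m s]
    ring
  have e4 : ∑ j : Fin (2 * m + 1), (if m < (j : ℕ) then x j * -(s : ℝ) else 0)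
      = (m : ℝ) * (s : ℝ) := by
    have : ∀ j : Fin (2 * m + 1), (if m < (j : ℕ) then x j * -(s : ℝ) else 0)
        = (if m < (j : ℕ) then x j else 0) * -(s : ℝ) := by
      intro j; split_ifs <;> ring
    rw [Finset.sum_congr rfl (fun j _ => this j), ← Finset.sum_mul,
      hx, Fin.sum_univ_eq_sum_range (fun a => if m < a then ggK m s a else 0), ggK_tail_sum m s]
    ring
  rw [e1, e2, e3, e4]
  ring

lemma key_lemma (lam : ℝ) (hlam : 0 < lam) (m s : ℕ) (hms : m = s ^ 2)
    (hs : 2 * lam + 1 ≤ (s : ℝ)) [DecidableRel (tildeK m).Adj] :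
    minEigM ((tildeK m).adjMatrix ℝ) < -lam := by
  classical
  set A := (tildeK m).adjMatrix ℝ with hA_def
  set x : Fin (2 * m + 1) → ℝ := fun i => ggK m s i.val with hx
  have hQ : x ⬝ᵥ A.mulVec x = -(2 * (m : ℝ)) - 2 * (s : ℝ) * (m : ℝ) := quad_form m s
  have hN : x ⬝ᵥ x = (s : ℝ) ^ 2 + 2 * m := by
    have : x ⬝ᵥ x = ∑ i, x i * x i := by simp [dotProduct]
    rw [this, hx, Fin.sum_univ_eq_sum_range (fun a => ggK m s a * ggK m s a)]
    exact ggK_sq_sum m s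
  have hA : A.IsHermitian := by
    rw [Matrix.IsHermitian, Matrix.conjTranspose_eq_transpose_of_trivial]
    exact SimpleGraph.isSymm_adjMatrix _
  set B := algebraMap ℝ (Matrix (Fin (2 * m + 1)) (Fin (2 * m + 1)) ℝ) lam + A with hB_def
  have hB : B.IsHermitian := by
    have h1 : (algebraMap ℝ (Matrix (Fin (2 * m + 1)) (Fin (2 * m + 1)) ℝ) lam).IsHermitian := by
      rw [Matrix.IsHermitian, Matrix.conjTranspose_eq_transpose_of_trivial,
        Algebra.algebraMap_eq_smul_one]
      ext i j
      simp [Matrix.transpose_apply, Matrix.one_apply, eq_comm]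
    exact h1.add hA
  have hmr : (m : ℝ) = (s : ℝ) ^ 2 := by rw [hms]; push_cast; ring
  have hs0 : (0 : ℝ) < (s : ℝ) := by linarith
  have hxB : x ⬝ᵥ B.mulVec x < 0 := by
    rw [hB_def, Matrix.add_mulVec, dotProduct_add, Algebra.algebraMap_eq_smul_one,
      Matrix.smul_mulVec, Matrix.one_mulVec, dotProduct_smul, hQ, hN, smul_eq_mul]
    nlinarith [sq_nonneg (s : ℝ), mul_pos hlam (mul_pos hs0 hs0),
      mul_le_mul_of_nonneg_right hs (le_of_lt (mul_pos hs0 hs0))]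
  have hEig : ∃ i, hB.eigenvalues i < 0 := by
    by_contra hcon
    push_neg at hcon
    have hpsd := hB.posSemidef_iff_eigenvalues_nonneg.mpr (fun i => hcon i)
    have h2 := hpsd.dotProduct_mulVec_nonneg x
    have hsx : star x = x := by
      funext i; exact star_trivial _
    rw [hsx] at h2
    exact absurd h2 (not_le.mpr hxB)
  obtain ⟨i, hi⟩ := hEig
  have hmem : hB.eigenvalues i ∈ spectrum ℝ B := hB.eigenvalues_mem_spectrum_real i
  have hmem2 : hB.eigenvalues i ∈ ({lam} : Set ℝ) + spectrum ℝ A := by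
    rw [spectrum.singleton_add_eq]
    exact hmem
  obtain ⟨u, hu, v, hv, huv⟩ := Set.mem_add.mp hmem2
  rw [Set.mem_singleton_iff] at hu
  rw [hu] at huv
  have hv' : v < -lam := by linarith
  exact lt_of_le_of_lt (csInf_le (Matrix.finite_real_spectrum.bddBelow) hv) hv'

end Aux

/-- For every positive real `λ` there is a positive integer `m` with
`λ_min(K̃_{2m}) < -λ`. -/
theorem stmt4 (lam : ℝ) (hlam : 0 < lam) :
    ∃ m : ℕ, 0 < m ∧ graphMinEig (tildeK m) < -lam := by
  classical
  set s : ℕ := ⌈2 * lam⌉₊ + 1 with hs_def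
  have hs : 2 * lam + 1 ≤ (s : ℝ) := by
    rw [hs_def]
    push_cast
    have := Nat.le_ceil (2 * lam)
    linarith
  have hspos : 0 < s := by rw [hs_def]; omega
  refine ⟨s ^ 2, pow_pos hspos 2, ?_⟩
  show minEigM ((tildeK (s ^ 2)).adjMatrix ℝ) < -lam
  exact key_lemma lam hlam (s ^ 2) s rfl hs
end
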